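/- Let k be an integer with 0 ≤ k ≤ m-1, and define a = (γ^(2m) + γ^(m+6k+2) + γ^(3k+1))/(3γ^(m+3k+1)), b = (γ^(2m+3k+1) + γ^(m+6k+2) + 1)/(3γ^(m+3k+1)), c = (γ^(6k+2) + γ^(3k+1) + 1)/(3γ^(3k+1)) in F_q, and let g(x) = a·x^(2m+1) + b·x^(m+1) + c·x. Then for every integer i with 0 ≤ i ≤ m-1 one has g(γ^(3i)) = γ^(3(i+k)+1). -/

import Mathlib

theorem stmt10 (q m : ℕ) (F : Type*) [Field F] [Fintype F]
    (hq : Fintype.card F = q) (hodd : Odd q) (hq3 : q % 3 = 1)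
    (hm : m = (q - 1) / 3)
    (γ : Fˣ) (hγ : ∀ x : Fˣ, x ∈ Subgroup.zpowers γ)
    (k : ℕ) (hk : k ≤ m - 1)
    (a b c : F)
    (ha : a = ((γ : F)^(2*m) + (γ : F)^(m+6*k+2) + (γ : F)^(3*k+1)) / (3 * (γ : F)^(m+3*k+1)))
    (hb : b = ((γ : F)^(2*m+3*k+1) + (γ : F)^(m+6*k+2) + 1) / (3 * (γ : F)^(m+3*k+1)))
    (hc : c = ((γ : F)^(6*k+2) + (γ : F)^(3*k+1) + 1) / (3 * (γ : F)^(3*k+1)))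
    (g : F → F)
    (hg : ∀ x : F, g x = a * x^(2*m+1) + b * x^(m+1) + c * x) :
    ∀ i : ℕ, i ≤ m - 1 → g ((γ : F)^(3*i)) = (γ : F)^(3*(i+k)+1) := by
  -- basic numerics
  have hq2 : 2 ≤ q := hq ▸ Fintype.one_lt_card
  have hdvd : 3 ∣ q - 1 := by omega
  have h3m : 3 * m = q - 1 := by omega
  have hm1 : 1 ≤ m := by omega
  -- order of γ
  have hord : orderOf γ = q - 1 := by
    rw [orderOf_eq_card_of_forall_mem_zpowers hγ]
    rw [Nat.card_units, Nat.card_eq_fintype_card, hq]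
  set t : F := (γ : F) with ht
  have htne : t ≠ 0 := Units.ne_zero γ
  have h3mF : t ^ (3 * m) = 1 := by
    have : γ ^ (3 * m) = 1 := by
      rw [h3m, ← hord]; exact pow_orderOf_eq_one γ
    calc t ^ (3*m) = ((γ ^ (3*m) : Fˣ) : F) := by rw [Units.val_pow_eq_pow_val]
    _ = 1 := by rw [this, Units.val_one]
  set ω : F := t ^ m with hω
  set s : F := t ^ (3 * k + 1) with hs
  have hωne : ω ≠ 1 := by
    intro h
    have : γ ^ m = 1 := by
      apply Units.ext
      rw [Units.val_pow_eq_pow_val, Units.val_one]; exact h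
    have := orderOf_dvd_of_pow_eq_one this
    rw [hord] at this
    have := Nat.le_of_dvd (by omega) this
    omega
  have hω3 : ω ^ 3 = 1 := by
    rw [hω, ← pow_mul, mul_comm m 3, h3mF]
  have hωrel : ω ^ 2 + ω + 1 = 0 := by
    have h : (ω - 1) * (ω ^ 2 + ω + 1) = 0 := by linear_combination hω3
    rcases mul_eq_zero.mp h with h' | h'
    · exact absurd (sub_eq_zero.mp h') hωne
    · exact h'
  have hωne0 : ω ≠ 0 := pow_ne_zero _ htne
  have hsne0 : s ≠ 0 := pow_ne_zero _ htne
  -- 3 ≠ 0 in F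
  have h3F : (3 : F) ≠ 0 := by
    intro h
    have hchar : ringChar F ∣ 3 := by
      have := (CharP.cast_eq_zero_iff F (ringChar F) 3).mp h
      exact this
    have hp : (ringChar F).Prime := CharP.char_is_prime F (ringChar F)
    have hp3 : ringChar F = 3 := by
      rcases (Nat.Prime.eq_one_or_self_of_dvd (by norm_num) _ hchar) with h' | h'
      · exact absurd h' hp.ne_one
      · exact h'
    obtain ⟨n, hn⟩ := FiniteField.card F (ringChar F)
    rw [hp3, hq] at hn
    have : 3 ∣ q := hn.2 ▸ dvd_pow_self 3 (by exact_mod_cast n.ne_zero)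
    omega
  -- rewrite powers in terms of ω and s
  have e1 : t ^ (2 * m) = ω ^ 2 := by rw [hω, ← pow_mul, mul_comm m 2]
  have e2 : t ^ (m + 6 * k + 2) = ω * s ^ 2 := by
    have h : m + 6 * k + 2 = m + (3 * k + 1) * 2 := by ring
    rw [h, pow_add, pow_mul, hω, hs]
  have e3 : t ^ (3 * k + 1) = s := rfl
  have e4 : t ^ (m + 3 * k + 1) = ω * s := by
    have h : m + 3 * k + 1 = m + (3 * k + 1) := by ring
    rw [h, pow_add, hω, hs]
  have e5 : t ^ (2 * m + 3 * k + 1) = ω ^ 2 * s := by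
    have h : 2 * m + 3 * k + 1 = 2 * m + (3 * k + 1) := by ring
    rw [h, pow_add, e1, hs]
  have e6 : t ^ (6 * k + 2) = s ^ 2 := by
    have h : 6 * k + 2 = (3 * k + 1) * 2 := by ring
    rw [h, pow_mul, hs]
  simp only [e1, e2, e3, e4, e5, e6] at ha hb hc
  have habc : a + b + c = s := by
    rw [ha, hb, hc]
    field_simp
    linear_combination (s + 1) * hωrel
  intro i hi
  rw [hg]
  have f1 : (t ^ (3 * i)) ^ (2 * m + 1) = t ^ (3 * i) := by
    rw [← pow_mul]
    have h : 3 * i * (2 * m + 1) = 3 * m * (2 * i) + 3 * i := by ring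
    rw [h, pow_add, pow_mul, h3mF, one_pow, one_mul]
  have f2 : (t ^ (3 * i)) ^ (m + 1) = t ^ (3 * i) := by
    rw [← pow_mul]
    have h : 3 * i * (m + 1) = 3 * m * i + 3 * i := by ring
    rw [h, pow_add, pow_mul, h3mF, one_pow, one_mul]
  have f3 : t ^ (3 * (i + k) + 1) = t ^ (3 * i) * s := by
    have h : 3 * (i + k) + 1 = 3 * i + (3 * k + 1) := by ring
    rw [h, pow_add, hs]
  rw [f1, f2, f3, ← habc]
  ring
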